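/- arXiv:1708.05319 — 2 statements merged into one kernel-verified Lean document; each statement's English description precedes it below -/
import Mathlib

section
/- Under the assumptions that Y is independent of S_1 with E[Y] = m_Y, Var[Y] = σ_Y² > 0, and Var[θᵀS_1] = V > 0, the equation (E[X(θ,0)] − C_0)/√V = (E[X(θ,q)] − C_0)/√(V + q²σ_Y²) in the unknown P (where X(θ,q) = qY + θᵀ(S_1 − S_0(1+r+λ)) + (C_0+P)(1+r+λ) and X(θ,0) uses P = P₀ fixed with E[X(θ,0)] > C_0) has the unique solution P(q)(1+r+λ) = −q m_Y + P₀(1+r+λ) + (E[X(θ,0)] − C_0)(√(1 + q²σ_Y²/V) − 1). -/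
open MeasureTheory Matrix

/-- Exact RAROC-indifference price of Section 2: the indifference equation
`(E[X(θ,0)] − C_0)/√V = (E[X(θ,q)] − C_0)/√(V + q²σ_Y²)` in the unknown quote `P`
has the unique solution
`P(1+r+λ) = −q m_Y + P₀(1+r+λ) + (E[X(θ,0)] − C_0)(√(1 + q²σ_Y²/V) − 1)`. -/
theorem raroc_indifference_price
    {Ω : Type*} [MeasurableSpace Ω] (μ : Measure Ω) [IsProbabilityMeasure μ]
    {d : ℕ} (S1 : Ω → Fin d → ℝ) (Y : Ω → ℝ) (S0 θ : Fin d → ℝ)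
    (q r lam C0 P₀ mY V σY : ℝ)
    (hV : 0 < V) (hσY : 0 < σY) (h1 : 0 < 1 + r + lam)
    (hYint : Integrable Y μ) (hmY : ∫ ω, Y ω ∂μ = mY)
    (hZint : Integrable (fun ω => θ ⬝ᵥ (S1 ω - (1 + r + lam) • S0)) μ)
    (X : ℝ → ℝ → Ω → ℝ)
    (hX : ∀ P q ω, X P q ω =
      q * Y ω + θ ⬝ᵥ (S1 ω - (1 + r + lam) • S0) + (C0 + P) * (1 + r + lam))
    (hE0 : C0 < ∫ ω, X P₀ 0 ω ∂μ) :
    ∀ P : ℝ,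
      ((∫ ω, X P₀ 0 ω ∂μ) - C0) / Real.sqrt V =
          ((∫ ω, X P q ω ∂μ) - C0) / Real.sqrt (V + q ^ 2 * σY ^ 2) ↔
      P * (1 + r + lam) =
        -(q * mY) + P₀ * (1 + r + lam) +
          ((∫ ω, X P₀ 0 ω ∂μ) - C0) *
            (Real.sqrt (1 + q ^ 2 * σY ^ 2 / V) - 1) := by
  intro P
  set I : ℝ := ∫ ω, θ ⬝ᵥ (S1 ω - (1 + r + lam) • S0) ∂μ with hI
  have key : ∀ P' q' : ℝ, ∫ ω, X P' q' ω ∂μ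
      = q' * mY + I + (C0 + P') * (1 + r + lam) := by
    intro P' q'
    simp only [hX]
    have hsum : Integrable (fun ω => q' * Y ω + θ ⬝ᵥ (S1 ω - (1 + r + lam) • S0)) μ :=
      (hYint.const_mul q').add hZint
    rw [integral_add hsum (integrable_const _),
      integral_add (hYint.const_mul q') hZint, MeasureTheory.integral_const_mul,
      integral_const, probReal_univ, one_smul, hmY]
  have hE0' : ∫ ω, X P₀ 0 ω ∂μ = I + (C0 + P₀) * (1 + r + lam) := by
    rw [key]; ring
  have hEq : ∫ ω, X P q ω ∂μ = q * mY + I + (C0 + P) * (1 + r + lam) := key P q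
  set A : ℝ := (∫ ω, X P₀ 0 ω ∂μ) - C0 with hA
  have hApos : 0 < A := by linarith
  have ht : 0 ≤ q ^ 2 * σY ^ 2 := by positivity
  have hsV : 0 < Real.sqrt V := Real.sqrt_pos.mpr hV
  have hsVt : 0 < Real.sqrt (V + q ^ 2 * σY ^ 2) := Real.sqrt_pos.mpr (by linarith)
  have hsplit : Real.sqrt (V + q ^ 2 * σY ^ 2)
      = Real.sqrt V * Real.sqrt (1 + q ^ 2 * σY ^ 2 / V) := by
    rw [← Real.sqrt_mul hV.le]
    congr 1
    field_simp
  rw [div_eq_div_iff hsV.ne' hsVt.ne', hsplit]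
  constructor
  · intro h
    have h2 : A * Real.sqrt (1 + q ^ 2 * σY ^ 2 / V) = (∫ ω, X P q ω ∂μ) - C0 :=
      mul_left_cancel₀ hsV.ne' (by linarith [h])
    rw [hEq] at h2
    have hArw : A = I + (C0 + P₀) * (1 + r + lam) - C0 := by rw [hA, hE0']
    nlinarith [h2, hArw]
  · intro h
    have hArw : A = I + (C0 + P₀) * (1 + r + lam) - C0 := by rw [hA, hE0']
    have h2 : A * Real.sqrt (1 + q ^ 2 * σY ^ 2 / V) = (∫ ω, X P q ω ∂μ) - C0 := by
      rw [hEq]; nlinarith [h, hArw]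
    rw [← h2]; ring
end

section
/- Under the hypotheses of the envelope theorem with f, g ∈ C² and θ*, χ ∈ C¹, the second derivative of the value function v(q) = f(θ*(q),q) satisfies v''(q) = ∂²f/∂q² − 2χ'(q)∂g/∂q − χ(q)∂²g/∂q² + Σ_{i,j} (χ(q)∂²g/∂θ_i∂θ_j − ∂²f/∂θ_i∂θ_j)(dθ*_j/dq)(dθ*_i/dq), all partials evaluated at (θ*(q),q). -/
open ContinuousLinearMap

set_option maxHeartbeats 1600000 in
/-- Second-order envelope formula: under `C²` data, a `C¹` curve of constrained maximizers
`θ*(q)` with `g(θ*(q),q) = c` and `C¹` Lagrange multiplier `χ(q)`, the value function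
`v(q) = f(θ*(q),q)` satisfies
`v''(q) = ∂²f/∂q² − 2χ'(q)∂g/∂q − χ(q)∂²g/∂q²
          + (χ(q) D²_θθ g − D²_θθ f)(dθ*/dq, dθ*/dq)`,
all partial derivatives being evaluated at `(θ*(q), q)`. -/
theorem second_order_envelope_theorem
    {d : ℕ} (f g : (Fin d → ℝ) → ℝ → ℝ) (c : ℝ)
    (hf : ContDiff ℝ 2 (fun p : (Fin d → ℝ) × ℝ => f p.1 p.2))
    (hg : ContDiff ℝ 2 (fun p : (Fin d → ℝ) × ℝ => g p.1 p.2))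
    (θs : ℝ → (Fin d → ℝ)) (hθs : ContDiff ℝ 1 θs)
    (χ : ℝ → ℝ) (hχ : ContDiff ℝ 1 χ)
    (hmax : ∀ q, ∀ θ : Fin d → ℝ, g θ q = c → f θ q ≤ f (θs q) q)
    (hconstraint : ∀ q, g (θs q) q = c)
    (hFOC : ∀ q, fderiv ℝ (fun θ => f θ q) (θs q) = χ q • fderiv ℝ (fun θ => g θ q) (θs q)) :
    ∀ q : ℝ,
      deriv (deriv (fun t => f (θs t) t)) q =
        deriv (deriv (fun t => f (θs q) t)) q
        - 2 * deriv χ q * deriv (fun t => g (θs q) t) q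
        - χ q * deriv (deriv (fun t => g (θs q) t)) q
        + (fderiv ℝ (fun θ => χ q • fderiv ℝ (fun θ' => g θ' q) θ
              - fderiv ℝ (fun θ' => f θ' q) θ) (θs q) (deriv θs q)) (deriv θs q) := by
  intro q₀
  set F : (Fin d → ℝ) × ℝ → ℝ := fun p => f p.1 p.2 with hFdef
  set G : (Fin d → ℝ) × ℝ → ℝ := fun p => g p.1 p.2 with hGdef
  have hfd : Differentiable ℝ F := hf.differentiable two_ne_zero
  have hgd : Differentiable ℝ G := hg.differentiable two_ne_zero
  have hfd' : Differentiable ℝ (fderiv ℝ F) :=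
    (hf.fderiv_right (m := 1) (by norm_num)).differentiable one_ne_zero
  have hgd' : Differentiable ℝ (fderiv ℝ G) :=
    (hg.fderiv_right (m := 1) (by norm_num)).differentiable one_ne_zero
  have hθd : Differentiable ℝ θs := hθs.differentiable one_ne_zero
  have hχd : Differentiable ℝ χ := hχ.differentiable one_ne_zero
  -- the curve q ↦ (θs q, q)
  have hγ : ∀ q : ℝ, HasDerivAt (fun t => ((θs t, t) : (Fin d → ℝ) × ℝ)) (deriv θs q, 1) q :=
    fun q => ((hθd q).hasDerivAt).prodMk (hasDerivAt_id q)
  -- partial θ-derivatives as compositions with inl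
  have hpf : ∀ (θ₀ : Fin d → ℝ) (q : ℝ),
      fderiv ℝ (fun θ => f θ q) θ₀ = (fderiv ℝ F (θ₀, q)).comp (inl ℝ (Fin d → ℝ) ℝ) :=
    fun θ₀ q => by have h := ((hfd (θ₀, q)).hasFDerivAt.comp θ₀ (hasFDerivAt_prodMk_left (𝕜 := ℝ) θ₀ q)).fderiv; exact h
  have hpg : ∀ (θ₀ : Fin d → ℝ) (q : ℝ),
      fderiv ℝ (fun θ => g θ q) θ₀ = (fderiv ℝ G (θ₀, q)).comp (inl ℝ (Fin d → ℝ) ℝ) :=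
    fun θ₀ q => by have h := ((hgd (θ₀, q)).hasFDerivAt.comp θ₀ (hasFDerivAt_prodMk_left (𝕜 := ℝ) θ₀ q)).fderiv; exact h
  -- the first-order condition, pointwise
  have hFOCv : ∀ (q : ℝ) (u : Fin d → ℝ),
      fderiv ℝ F (θs q, q) (u, 0) = χ q * fderiv ℝ G (θs q, q) (u, 0) := by
    intro q u
    have h := hFOC q
    rw [hpf, hpg] at h
    have h2 := ContinuousLinearMap.ext_iff.mp h u
    simpa using h2
  -- derivative of the constraint
  have hcon : ∀ q : ℝ, fderiv ℝ G (θs q, q) (deriv θs q, 1) = 0 := by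
    intro q
    have h1 : HasDerivAt (fun t => G (θs t, t)) (fderiv ℝ G (θs q, q) (deriv θs q, 1)) q :=
      (hgd (θs q, q)).hasFDerivAt.comp_hasDerivAt
        (f := fun t => ((θs t, t) : (Fin d → ℝ) × ℝ)) q (hγ q)
    have h2 : (fun t => G (θs t, t)) = fun _ => c := funext fun t => hconstraint t
    rw [h2] at h1
    exact h1.unique (hasDerivAt_const q c)
  have hsplit : ∀ v : Fin d → ℝ, ((v, (1:ℝ)) : (Fin d → ℝ) × ℝ) = (v, 0) + (0, 1) := by simp
  -- first derivative of the value function (envelope formula)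
  have hv' : deriv (fun t => f (θs t) t) =
      fun q => fderiv ℝ F (θs q, q) (0, 1) - χ q * fderiv ℝ G (θs q, q) (0, 1) := by
    funext q
    have h1 : HasDerivAt (fun t => F (θs t, t)) (fderiv ℝ F (θs q, q) (deriv θs q, 1)) q :=
      (hfd (θs q, q)).hasFDerivAt.comp_hasDerivAt
        (f := fun t => ((θs t, t) : (Fin d → ℝ) × ℝ)) q (hγ q)
    have h2 : deriv (fun t => f (θs t) t) q = fderiv ℝ F (θs q, q) (deriv θs q, 1) := h1.deriv
    have h3 := hcon q
    rw [hsplit (deriv θs q), map_add] at h3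
    have h4 : fderiv ℝ G (θs q, q) (deriv θs q, 0) = - fderiv ℝ G (θs q, q) (0, 1) := by
      linarith
    rw [h2, hsplit (deriv θs q), map_add, hFOCv q (deriv θs q), h4]
    ring
  -- second derivatives; notation
  set v := deriv θs q₀ with hv
  set w : (Fin d → ℝ) × ℝ := (v, 1) with hw
  set D2F := fderiv ℝ (fderiv ℝ F) (θs q₀, q₀) with hD2F
  set D2G := fderiv ℝ (fderiv ℝ G) (θs q₀, q₀) with hD2G
  -- derivative of q ↦ fderiv F (θs q, q)
  have hDF : HasDerivAt (fun t => fderiv ℝ F (θs t, t)) (D2F w) q₀ :=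
    (hfd' (θs q₀, q₀)).hasFDerivAt.comp_hasDerivAt
      (f := fun t => ((θs t, t) : (Fin d → ℝ) × ℝ)) q₀ (hγ q₀)
  have hDG : HasDerivAt (fun t => fderiv ℝ G (θs t, t)) (D2G w) q₀ :=
    (hgd' (θs q₀, q₀)).hasFDerivAt.comp_hasDerivAt
      (f := fun t => ((θs t, t) : (Fin d → ℝ) × ℝ)) q₀ (hγ q₀)
  have hDFe : HasDerivAt (fun t => fderiv ℝ F (θs t, t) (0, 1)) (D2F w (0, 1)) q₀ := by
    simpa using hDF.clm_apply (hasDerivAt_const q₀ ((0 : Fin d → ℝ), (1 : ℝ)))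
  have hDGe : HasDerivAt (fun t => fderiv ℝ G (θs t, t) (0, 1)) (D2G w (0, 1)) q₀ := by
    simpa using hDG.clm_apply (hasDerivAt_const q₀ ((0 : Fin d → ℝ), (1 : ℝ)))
  -- LHS : second derivative of the value function
  have hLHS : deriv (deriv (fun t => f (θs t) t)) q₀ =
      D2F w (0, 1) - (deriv χ q₀ * fderiv ℝ G (θs q₀, q₀) (0, 1) + χ q₀ * D2G w (0, 1)) := by
    rw [hv']
    exact (hDFe.sub ((hχd q₀).hasDerivAt.mul hDGe)).deriv
  -- ∂²f/∂q² and ∂²g/∂q²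
  have hqq : ∀ (H : (Fin d → ℝ) × ℝ → ℝ), Differentiable ℝ H →
      Differentiable ℝ (fderiv ℝ H) →
      deriv (deriv (fun t => H (θs q₀, t))) q₀ =
        fderiv ℝ (fderiv ℝ H) (θs q₀, q₀) (0, 1) (0, 1) := by
    intro H hH hH'
    have hcurve : ∀ t : ℝ, HasDerivAt (fun s => ((θs q₀, s) : (Fin d → ℝ) × ℝ)) (0, 1) t :=
      fun t => (hasDerivAt_const t (θs q₀)).prodMk (hasDerivAt_id t)
    have h1 : deriv (fun t => H (θs q₀, t)) = fun t => fderiv ℝ H (θs q₀, t) (0, 1) := by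
      funext t
      exact ((hH (θs q₀, t)).hasFDerivAt.comp_hasDerivAt t (hcurve t)).deriv
    rw [h1]
    have h2 : HasDerivAt (fun t => fderiv ℝ H (θs q₀, t))
        (fderiv ℝ (fderiv ℝ H) (θs q₀, q₀) (0, 1)) q₀ :=
      (hH' (θs q₀, q₀)).hasFDerivAt.comp_hasDerivAt q₀ (hcurve q₀)
    have h3 := h2.clm_apply (hasDerivAt_const q₀ ((0 : Fin d → ℝ), (1 : ℝ)))
    simpa using h3.deriv
  have hqqf : deriv (deriv (fun t => f (θs q₀) t)) q₀ = D2F (0, 1) (0, 1) := hqq F hfd hfd'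
  have hqqg : deriv (deriv (fun t => g (θs q₀) t)) q₀ = D2G (0, 1) (0, 1) := hqq G hgd hgd'
  -- first partial of g in q
  have hq1g : deriv (fun t => g (θs q₀) t) q₀ = fderiv ℝ G (θs q₀, q₀) (0, 1) := by
    have hcurve : HasDerivAt (fun s => ((θs q₀, s) : (Fin d → ℝ) × ℝ)) (0, 1) q₀ :=
      (hasDerivAt_const q₀ (θs q₀)).prodMk (hasDerivAt_id q₀)
    exact ((hgd (θs q₀, q₀)).hasFDerivAt.comp_hasDerivAt q₀ hcurve).deriv
  -- the quadratic form term
  set Φ : (((Fin d → ℝ) × ℝ) →L[ℝ] ℝ) →L[ℝ] ((Fin d → ℝ) →L[ℝ] ℝ) :=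
    (compL ℝ (Fin d → ℝ) ((Fin d → ℝ) × ℝ) ℝ).flip (inl ℝ (Fin d → ℝ) ℝ) with hΦdef
  have hΦapp : ∀ L, Φ L = L.comp (inl ℝ (Fin d → ℝ) ℝ) := fun L => rfl
  have hF2 : HasFDerivAt (fun θ => fderiv ℝ F (θ, q₀)) (D2F.comp (inl ℝ (Fin d → ℝ) ℝ)) (θs q₀) :=
    (hfd' (θs q₀, q₀)).hasFDerivAt.comp (θs q₀) (hasFDerivAt_prodMk_left (𝕜 := ℝ) (θs q₀) q₀)
  have hG2 : HasFDerivAt (fun θ => fderiv ℝ G (θ, q₀)) (D2G.comp (inl ℝ (Fin d → ℝ) ℝ)) (θs q₀) :=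
    (hgd' (θs q₀, q₀)).hasFDerivAt.comp (θs q₀) (hasFDerivAt_prodMk_left (𝕜 := ℝ) (θs q₀) q₀)
  have hΨeq : (fun θ => χ q₀ • fderiv ℝ (fun θ' => g θ' q₀) θ - fderiv ℝ (fun θ' => f θ' q₀) θ)
      = fun θ => Φ (χ q₀ • fderiv ℝ G (θ, q₀) - fderiv ℝ F (θ, q₀)) := by
    funext θ
    rw [hpf, hpg, hΦapp, sub_comp, smul_comp]
  have hΨ : HasFDerivAt
      (fun θ => χ q₀ • fderiv ℝ (fun θ' => g θ' q₀) θ - fderiv ℝ (fun θ' => f θ' q₀) θ)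
      (Φ.comp ((χ q₀ • D2G.comp (inl ℝ (Fin d → ℝ) ℝ)) - D2F.comp (inl ℝ (Fin d → ℝ) ℝ)))
      (θs q₀) := by
    rw [hΨeq]
    exact Φ.hasFDerivAt.comp (θs q₀) ((hG2.const_smul (χ q₀)).sub hF2)
  have hquad : (fderiv ℝ (fun θ => χ q₀ • fderiv ℝ (fun θ' => g θ' q₀) θ
        - fderiv ℝ (fun θ' => f θ' q₀) θ) (θs q₀) v) v
      = χ q₀ * D2G (v, 0) (v, 0) - D2F (v, 0) (v, 0) := by
    rw [hΨ.fderiv]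
    simp [hΦapp]
  -- differentiated first-order condition
  have hΛ : (fun q => (fderiv ℝ F (θs q, q)).comp (inl ℝ (Fin d → ℝ) ℝ)
      - χ q • ((fderiv ℝ G (θs q, q)).comp (inl ℝ (Fin d → ℝ) ℝ)))
      = fun _ => (0 : (Fin d → ℝ) →L[ℝ] ℝ) := by
    funext q
    have h := hFOC q
    rw [hpf, hpg] at h
    ext u
    simp [h]
  have hΛF : HasDerivAt (fun q => (fderiv ℝ F (θs q, q)).comp (inl ℝ (Fin d → ℝ) ℝ))
      ((D2F w).comp (inl ℝ (Fin d → ℝ) ℝ)) q₀ := by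
    simpa using hDF.clm_comp (hasDerivAt_const q₀ (inl ℝ (Fin d → ℝ) ℝ))
  have hΛG : HasDerivAt (fun q => (fderiv ℝ G (θs q, q)).comp (inl ℝ (Fin d → ℝ) ℝ))
      ((D2G w).comp (inl ℝ (Fin d → ℝ) ℝ)) q₀ := by
    simpa using hDG.clm_comp (hasDerivAt_const q₀ (inl ℝ (Fin d → ℝ) ℝ))
  have hFOCd : D2F w (v, 0) =
      deriv χ q₀ * fderiv ℝ G (θs q₀, q₀) (v, 0) + χ q₀ * D2G w (v, 0) := by
    have hD : HasDerivAt (fun q => (fderiv ℝ F (θs q, q)).comp (inl ℝ (Fin d → ℝ) ℝ)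
        - χ q • ((fderiv ℝ G (θs q, q)).comp (inl ℝ (Fin d → ℝ) ℝ)))
        ((D2F w).comp (inl ℝ (Fin d → ℝ) ℝ)
          - (χ q₀ • (D2G w).comp (inl ℝ (Fin d → ℝ) ℝ)
             + deriv χ q₀ • (fderiv ℝ G (θs q₀, q₀)).comp (inl ℝ (Fin d → ℝ) ℝ))) q₀ :=
      hΛF.sub ((hχd q₀).hasDerivAt.smul hΛG)
    rw [hΛ] at hD
    have h0 := hD.unique (hasDerivAt_const q₀ (0 : (Fin d → ℝ) →L[ℝ] ℝ))
    have h1 := ContinuousLinearMap.ext_iff.mp h0.symm v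
    simp only [ContinuousLinearMap.sub_apply, ContinuousLinearMap.add_apply,
      ContinuousLinearMap.smul_apply, ContinuousLinearMap.comp_apply,
      ContinuousLinearMap.inl_apply, ContinuousLinearMap.zero_apply, smul_eq_mul] at h1
    linarith
  -- symmetry of second derivatives
  have hsymF : D2F (v, 0) (0, 1) = D2F (0, 1) (v, 0) :=
    (hf.contDiffAt.isSymmSndFDerivAt (by norm_num)) (v, 0) (0, 1)
  have hsymG : D2G (v, 0) (0, 1) = D2G (0, 1) (v, 0) :=
    (hg.contDiffAt.isSymmSndFDerivAt (by norm_num)) (v, 0) (0, 1)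
  -- constraint derivative at q₀, split
  have hconq : fderiv ℝ G (θs q₀, q₀) (v, 0) = - fderiv ℝ G (θs q₀, q₀) (0, 1) := by
    have h := hcon q₀
    rw [hsplit v, map_add] at h
    linarith
  -- assemble
  rw [hLHS, hqqf, hqqg, hq1g, hquad]
  have hwsplit : w = ((v, 0) : (Fin d → ℝ) × ℝ) + (0, 1) := hsplit v
  rw [hwsplit] at hFOCd ⊢
  simp only [map_add, ContinuousLinearMap.add_apply] at hFOCd ⊢
  rw [hconq] at hFOCd
  linear_combination hFOCd + hsymF - χ q₀ * hsymG
end
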